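/- Let p ≥ 2 be an integer, let T be a real-valued random variable with finite second moment, and let a > 0. Then E| |T|^{1/p} − a |^2 ≤ min{ (E(T − a^p)^2)^{1/p} , a^{2−2p} E(T − a^p)^2 }. In particular, for any probability density f with ‖f‖_p > 0 and any estimator T̂ of ‖f‖_p^p, the estimator N̂ := |T̂|^{1/p} of ‖f‖_p satisfies E_f|N̂ − ‖f‖_p|^2 ≤ min{ (E_f(T̂ − ‖f‖_p^p)^2)^{1/p} , E_f(T̂ − ‖f‖_p^p)^2 / ‖f‖_p^{2p−2} }. -/

import Mathlib

open MeasureTheory ProbabilityTheory Filter Finset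
open scoped ENNReal NNReal

noncomputable section

namespace NormEst

/-- The scaled kernel `K_h(x) = V_h⁻¹ · K(x₁/h₁,…,x_d/h_d)`. -/
def scaledKernel {d : ℕ} (K : (Fin d → ℝ) → ℝ) (h : Fin d → ℝ) (x : Fin d → ℝ) : ℝ :=
  (∏ k, h k)⁻¹ * K (fun i => x i / h i)

/-- The smoothed density `S_h(x) = ∫ K_h(x − y) f(y) dy`. -/
def smoothed {d : ℕ} (K : (Fin d → ℝ) → ℝ) (h : Fin d → ℝ) (f : (Fin d → ℝ) → ℝ)
    (x : Fin d → ℝ) : ℝ :=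
  ∫ y, scaledKernel K h (x - y) * f y

/-- The bias function `B_h = S_h − f`. -/
def biasFun {d : ℕ} (K : (Fin d → ℝ) → ℝ) (h : Fin d → ℝ) (f : (Fin d → ℝ) → ℝ)
    (x : Fin d → ℝ) : ℝ :=
  smoothed K h f x - f x

/-- `f` is a probability density on `ℝ^d`. -/
def IsDensity {d : ℕ} (f : (Fin d → ℝ) → ℝ) : Prop :=
  Measurable f ∧ (∀ x, 0 ≤ f x) ∧ (∫ x, f x) = 1

/-- `K` is supported on `[-1,1]^d`. -/
def SuppIcc {d : ℕ} (K : (Fin d → ℝ) → ℝ) : Prop :=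
  ∀ x : Fin d → ℝ, x ∉ Set.Icc (fun _ => (-1 : ℝ)) (fun _ => (1 : ℝ)) → K x = 0

/-- The sup-norm `‖K‖_∞` of a (bounded) kernel. -/
def supNorm {d : ℕ} (K : (Fin d → ℝ) → ℝ) : ℝ := ⨆ x, |K x|

/-- The kernel `U_h^{(1)}(x₁,…,x_p) = ∫ K_h(y−x₁)⋯K_h(y−x_p) dy`. -/
def U1 {d : ℕ} (p : ℕ) (K : (Fin d → ℝ) → ℝ) (h : Fin d → ℝ)
    (x : Fin p → Fin d → ℝ) : ℝ :=
  ∫ y, ∏ i, scaledKernel K h (y - x i)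

/-- The kernel `U_h^{(2)}(x₁,…,x_p) = p⁻¹ Σ_i Π_{j≠i} K_h(x_j−x_i)`. -/
def U2 {d : ℕ} (p : ℕ) (K : (Fin d → ℝ) → ℝ) (h : Fin d → ℝ)
    (x : Fin p → Fin d → ℝ) : ℝ :=
  (p : ℝ)⁻¹ * ∑ i, ∏ j ∈ Finset.univ.erase i, scaledKernel K h (x j - x i)

/-- The U-statistic with kernel `U` built from the data `X = (X₁,…,X_n)`:
the sum over all `p`-element subsets of `{1,…,n}` (each subset enumerated in
increasing order), divided by the binomial coefficient `C(n,p)`. -/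
def ustat {α : Type*} {n p : ℕ} (U : (Fin p → α) → ℝ) (X : Fin n → α) : ℝ :=
  ((n.choose p : ℝ))⁻¹ *
    ∑ s ∈ (Finset.powersetCard p (Finset.univ : Finset (Fin n))).attach,
      U (fun i => X ((s.1.orderIsoOfFin (Finset.mem_powersetCard.mp s.2).2 i : Fin n)))

/-- `T̂_h = (1−p)·T̂_{1,h} + p·T̂_{2,h}`, evaluated on the data `X`. -/
def Tstat {d : ℕ} (p : ℕ) (K : (Fin d → ℝ) → ℝ) (h : Fin d → ℝ) {n : ℕ}
    (X : Fin n → Fin d → ℝ) : ℝ :=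
  (1 - (p : ℝ)) * ustat (U1 p K h) X + (p : ℝ) * ustat (U2 p K h) X

/-- The `L_s(ℝ^d)` norm (with respect to Lebesgue measure), as a real number. -/
def LpNorm {d : ℕ} (s : ℝ≥0∞) (f : (Fin d → ℝ) → ℝ) : ℝ :=
  (eLpNorm f s volume).toReal


private lemma abs_pow_sub_le (x a : ℝ) (hx : 0 ≤ x) (ha : 0 ≤ a) (n : ℕ) (hn : n ≠ 0) :
    |x - a| ^ n ≤ |x ^ n - a ^ n| := by
  wlog h : a ≤ x generalizing x a
  · have := this a x ha hx (le_of_not_ge h)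
    rwa [abs_sub_comm, abs_sub_comm (a ^ n)] at this
  have hxa : a ^ n ≤ x ^ n := pow_le_pow_left₀ ha h n
  rw [abs_of_nonneg (by linarith), abs_of_nonneg (by linarith)]
  have := pow_add_pow_le (x := x - a) (y := a) (by linarith) ha hn
  rw [sub_add_cancel] at this
  linarith

private lemma mul_abs_sub_le (x a : ℝ) (hx : 0 ≤ x) (ha : 0 ≤ a) (n : ℕ) (hn : n ≠ 0) :
    a ^ (n - 1) * |x - a| ≤ |x ^ n - a ^ n| := by
  rw [← geom_sum₂_mul x a n, abs_mul]
  gcongr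
  have h0 : (0:ℝ) ≤ ∑ i ∈ Finset.range n, x ^ i * a ^ (n - 1 - i) := by positivity
  rw [abs_of_nonneg h0]
  calc a ^ (n - 1) = x ^ 0 * a ^ (n - 1 - 0) := by simp
    _ ≤ _ := Finset.single_le_sum (f := fun i => x ^ i * a ^ (n-1-i))
        (fun i _ => by positivity) (Finset.mem_range.2 (Nat.pos_of_ne_zero hn))

private lemma jensen_rpow {Ω : Type*} [MeasurableSpace Ω] (P : Measure Ω) [IsProbabilityMeasure P]
    {g : Ω → ℝ} (hg : Integrable g P) (hg0 : ∀ ω, 0 ≤ g ω) {θ : ℝ} (hθ0 : 0 < θ) (hθ1 : θ ≤ 1) :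
    ∫ ω, g ω ^ θ ∂P ≤ (∫ ω, g ω ∂P) ^ θ := by
  set c := ∫ ω, g ω ∂P with hc
  have hc0 : 0 ≤ c := integral_nonneg hg0
  rcases eq_or_lt_of_le hc0 with hc' | hc'
  · have hg00 : g =ᵐ[P] 0 := (integral_eq_zero_iff_of_nonneg hg0 hg).mp hc'.symm
    have h00 : (fun ω => g ω ^ θ) =ᵐ[P] 0 := by
      filter_upwards [hg00] with ω hω
      simp only [Pi.zero_apply] at hω ⊢
      simp [hω, Real.zero_rpow hθ0.ne']
    rw [integral_congr_ae h00]
    simpa using Real.rpow_nonneg hc0 θ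
  · have hcc : c ^ (θ - 1) * c = c ^ θ := by
      rw [← Real.rpow_add_one hc'.ne' (θ - 1)]; norm_num
    have key : ∀ ω, g ω ^ θ ≤ θ * c ^ (θ - 1) * g ω + (1 - θ) * c ^ θ := by
      intro ω
      have amgm := Real.geom_mean_le_arith_mean2_weighted (w₁ := θ) (w₂ := 1 - θ)
        (p₁ := g ω) (p₂ := c) hθ0.le (by linarith) (hg0 ω) hc0 (by ring)
      have h2 : g ω ^ θ * c ^ (1 - θ) * c ^ (θ - 1) ≤ (θ * g ω + (1 - θ) * c) * c ^ (θ - 1) :=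
        mul_le_mul_of_nonneg_right amgm (Real.rpow_nonneg hc0 _)
      have h3 : c ^ (1 - θ) * c ^ (θ - 1) = 1 := by
        rw [← Real.rpow_add hc']; norm_num
      calc g ω ^ θ = g ω ^ θ * (c ^ (1 - θ) * c ^ (θ - 1)) := by rw [h3, mul_one]
        _ = g ω ^ θ * c ^ (1 - θ) * c ^ (θ - 1) := by ring
        _ ≤ (θ * g ω + (1 - θ) * c) * c ^ (θ - 1) := h2
        _ = θ * c ^ (θ - 1) * g ω + (1 - θ) * (c ^ (θ - 1) * c) := by ring
        _ = θ * c ^ (θ - 1) * g ω + (1 - θ) * c ^ θ := by rw [hcc]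
    have hInt : Integrable (fun ω => θ * c ^ (θ - 1) * g ω + (1 - θ) * c ^ θ) P :=
      (hg.const_mul _).add (integrable_const _)
    calc ∫ ω, g ω ^ θ ∂P ≤ ∫ ω, (θ * c ^ (θ - 1) * g ω + (1 - θ) * c ^ θ) ∂P :=
          integral_mono_of_nonneg (Filter.Eventually.of_forall fun ω =>
            Real.rpow_nonneg (hg0 ω) θ) hInt (Filter.Eventually.of_forall key)
      _ = θ * c ^ (θ - 1) * c + (1 - θ) * c ^ θ := by
          rw [integral_add (hg.const_mul _) (integrable_const _), integral_const_mul,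
            integral_const, probReal_univ, smul_eq_mul, one_mul, ← hc]
      _ = c ^ θ := by rw [mul_assoc, hcc]; ring

private lemma keyabs (p : ℕ) (hp : 2 ≤ p) (t a : ℝ) (ha : 0 < a) :
    |(|t| ^ ((1 : ℝ) / p)) - a| ≤ |t - a ^ p| ^ ((1 : ℝ) / p) ∧
    a ^ (p - 1) * |(|t| ^ ((1 : ℝ) / p)) - a| ≤ |t - a ^ p| := by
  have hp0 : (p:ℝ) ≠ 0 := by positivity
  set x := |t| ^ ((1:ℝ)/p) with hxdef
  have hx : 0 ≤ x := Real.rpow_nonneg (abs_nonneg t) _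
  have hxp : x ^ p = |t| := by
    rw [hxdef, ← Real.rpow_natCast (|t| ^ ((1:ℝ)/p)) p, ← Real.rpow_mul (abs_nonneg t)]
    field_simp
    simp
  have h3 : |x ^ p - a ^ p| ≤ |t - a ^ p| := by
    calc |x ^ p - a ^ p| = abs (|t| - |a ^ p|) := by
          rw [hxp, abs_of_nonneg (pow_nonneg ha.le p)]
      _ ≤ |t - a ^ p| := abs_abs_sub_abs_le_abs_sub t (a ^ p)
  constructor
  · have h1 : |x - a| ^ p ≤ |t - a ^ p| :=
      (abs_pow_sub_le x a hx ha.le p (by omega)).trans h3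
    calc |x - a| = (|x - a| ^ p) ^ ((1:ℝ)/p) := by
          rw [← Real.rpow_natCast (|x-a|) p, ← Real.rpow_mul (abs_nonneg _)]
          field_simp
          simp
      _ ≤ |t - a ^ p| ^ ((1:ℝ)/p) :=
          Real.rpow_le_rpow (by positivity) h1 (by positivity)
  · exact (mul_abs_sub_le x a hx ha.le p (by omega)).trans h3

private lemma core (p : ℕ) (hp : 2 ≤ p) {Ω : Type*} [MeasurableSpace Ω] (P : Measure Ω)
    [IsProbabilityMeasure P] (T : Ω → ℝ) (hT : MemLp T 2 P) (a : ℝ) (ha : 0 < a) :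
    (∫ ω, |(|T ω| ^ ((1 : ℝ) / p)) - a| ^ 2 ∂P) ≤
      min ((∫ ω, (T ω - a ^ p) ^ 2 ∂P) ^ ((1 : ℝ) / p))
        (a ^ ((2 : ℝ) - 2 * (p : ℝ)) * ∫ ω, (T ω - a ^ p) ^ 2 ∂P) := by
  have hp0 : (0:ℝ) < p := by positivity
  have hθ0 : 0 < (1:ℝ)/p := by positivity
  have hθ1 : (1:ℝ)/p ≤ 1 := by
    rw [div_le_one hp0]; exact_mod_cast by omega
  have hgInt : Integrable (fun ω => (T ω - a ^ p) ^ 2) P :=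
    (hT.sub (memLp_const _)).integrable_sq
  have hg0 : ∀ ω, (0:ℝ) ≤ (T ω - a ^ p) ^ 2 := fun ω => sq_nonneg _
  refine le_min ?_ ?_
  · -- first bound
    have hmeas : AEStronglyMeasurable (fun ω => ((T ω - a ^ p) ^ 2) ^ ((1:ℝ)/p)) P :=
      (Real.continuous_rpow_const hθ0.le).comp_aestronglyMeasurable hgInt.aestronglyMeasurable
    have hIntg : Integrable (fun ω => ((T ω - a ^ p) ^ 2) ^ ((1:ℝ)/p)) P := by
      refine Integrable.mono' ((integrable_const 1).add hgInt) hmeas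
        (Filter.Eventually.of_forall fun ω => ?_)
      rw [Real.norm_eq_abs, abs_of_nonneg (Real.rpow_nonneg (hg0 ω) _)]
      rcases le_total ((T ω - a ^ p) ^ 2) 1 with h | h
      · have := Real.rpow_le_one (hg0 ω) h hθ0.le
        simp only [Pi.add_apply]; linarith [hg0 ω]
      · have := Real.rpow_le_rpow_of_exponent_le h hθ1
        rw [Real.rpow_one] at this
        simp only [Pi.add_apply]; linarith
    have ptA : ∀ ω, |(|T ω| ^ ((1 : ℝ) / p)) - a| ^ 2 ≤ ((T ω - a ^ p) ^ 2) ^ ((1:ℝ)/p) := by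
      intro ω
      have h1 := (keyabs p hp (T ω) a ha).1
      have h2 := pow_le_pow_left₀ (abs_nonneg _) h1 2
      calc |(|T ω| ^ ((1 : ℝ) / p)) - a| ^ 2 ≤ (|T ω - a ^ p| ^ ((1:ℝ)/p)) ^ 2 := h2
        _ = |T ω - a ^ p| ^ (((1:ℝ)/p) * 2) := by
            rw [← Real.rpow_natCast (|T ω - a ^ p| ^ ((1:ℝ)/p)) 2,
              ← Real.rpow_mul (abs_nonneg _)]
            norm_num
        _ = ((T ω - a ^ p) ^ 2) ^ ((1:ℝ)/p) := by
            rw [← sq_abs (T ω - a ^ p), ← Real.rpow_natCast (|T ω - a ^ p|) 2,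
              ← Real.rpow_mul (abs_nonneg _)]
            norm_num
            rw [mul_comm]
    calc (∫ ω, |(|T ω| ^ ((1 : ℝ) / p)) - a| ^ 2 ∂P)
        ≤ ∫ ω, ((T ω - a ^ p) ^ 2) ^ ((1:ℝ)/p) ∂P :=
          integral_mono_of_nonneg (Filter.Eventually.of_forall fun ω => by positivity)
            hIntg (Filter.Eventually.of_forall ptA)
      _ ≤ (∫ ω, (T ω - a ^ p) ^ 2 ∂P) ^ ((1:ℝ)/p) := jensen_rpow P hgInt hg0 hθ0 hθ1
  · -- second bound
    have he : a ^ ((2:ℝ) - 2 * (p:ℝ)) = ((a ^ (p - 1)) ^ 2)⁻¹ := by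
      rw [← pow_mul, ← Real.rpow_natCast a ((p - 1) * 2), ← Real.rpow_neg ha.le]
      congr 1
      push_cast [Nat.cast_sub (show 1 ≤ p by omega)]
      ring
    have ptB : ∀ ω, |(|T ω| ^ ((1 : ℝ) / p)) - a| ^ 2 ≤
        a ^ ((2:ℝ) - 2 * (p:ℝ)) * (T ω - a ^ p) ^ 2 := by
      intro ω
      have h1 := (keyabs p hp (T ω) a ha).2
      have h2 := pow_le_pow_left₀ (by positivity) h1 2
      rw [mul_pow, sq_abs (T ω - a ^ p)] at h2
      have hpos : (0:ℝ) < (a ^ (p - 1)) ^ 2 := by positivity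
      rw [he, inv_mul_eq_div, le_div_iff₀ hpos]
      calc |(|T ω| ^ ((1 : ℝ) / p)) - a| ^ 2 * (a ^ (p - 1)) ^ 2
          = (a ^ (p - 1)) ^ 2 * |(|T ω| ^ ((1 : ℝ) / p)) - a| ^ 2 := by ring
        _ ≤ (T ω - a ^ p) ^ 2 := h2
    calc (∫ ω, |(|T ω| ^ ((1 : ℝ) / p)) - a| ^ 2 ∂P)
        ≤ ∫ ω, a ^ ((2:ℝ) - 2 * (p:ℝ)) * (T ω - a ^ p) ^ 2 ∂P :=
          integral_mono_of_nonneg (Filter.Eventually.of_forall fun ω => by positivity)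
            (hgInt.const_mul _) (Filter.Eventually.of_forall ptB)
      _ = a ^ ((2:ℝ) - 2 * (p:ℝ)) * ∫ ω, (T ω - a ^ p) ^ 2 ∂P := integral_const_mul _ _

/-- **Risk reduction (expectation version).** For an integer `p ≥ 2`, a real random
variable `T` with finite second moment and `a > 0`,
`E||T|^{1/p} − a|² ≤ min{(E(T − a^p)²)^{1/p}, a^{2−2p} E(T − a^p)²}`; in particular,
for a probability density `f` with `‖f‖_p > 0` and an estimator `T̂` of `‖f‖_p^p`,
the estimator `N̂ = |T̂|^{1/p}` of `‖f‖_p` satisfies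
`E_f|N̂ − ‖f‖_p|² ≤ min{(E_f(T̂ − ‖f‖_p^p)²)^{1/p}, E_f(T̂ − ‖f‖_p^p)²/‖f‖_p^{2p−2}}`. -/
theorem risk_reduction (p : ℕ) (hp : 2 ≤ p)
    {Ω : Type*} [MeasurableSpace Ω] (P : Measure Ω) [IsProbabilityMeasure P] :
    (∀ (T : Ω → ℝ), MemLp T 2 P → ∀ (a : ℝ), 0 < a →
      (∫ ω, |(|T ω| ^ ((1 : ℝ) / p)) - a| ^ 2 ∂P) ≤
        min ((∫ ω, (T ω - a ^ p) ^ 2 ∂P) ^ ((1 : ℝ) / p))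
          (a ^ ((2 : ℝ) - 2 * (p : ℝ)) * ∫ ω, (T ω - a ^ p) ^ 2 ∂P)) ∧
    (∀ {d : ℕ} (f : (Fin d → ℝ) → ℝ), IsDensity f → 0 < LpNorm (p : ℝ≥0∞) f →
      ∀ (That : Ω → ℝ), MemLp That 2 P →
      (∫ ω, |(|That ω| ^ ((1 : ℝ) / p)) - LpNorm (p : ℝ≥0∞) f| ^ 2 ∂P) ≤
        min ((∫ ω, (That ω - LpNorm (p : ℝ≥0∞) f ^ p) ^ 2 ∂P) ^ ((1 : ℝ) / p))
          ((∫ ω, (That ω - LpNorm (p : ℝ≥0∞) f ^ p) ^ 2 ∂P) /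
            LpNorm (p : ℝ≥0∞) f ^ (2 * p - 2))) := by
  constructor
  · intro T hT a ha
    exact core p hp P T hT a ha
  · intro d f hf hpos That hThat
    have h := core p hp P That hThat _ hpos
    have he : LpNorm (p : ℝ≥0∞) f ^ ((2:ℝ) - 2 * (p:ℝ)) *
        (∫ ω, (That ω - LpNorm (p : ℝ≥0∞) f ^ p) ^ 2 ∂P) =
        (∫ ω, (That ω - LpNorm (p : ℝ≥0∞) f ^ p) ^ 2 ∂P) /
          LpNorm (p : ℝ≥0∞) f ^ (2 * p - 2) := by
      have hne : LpNorm (p : ℝ≥0∞) f ^ ((2:ℝ) - 2 * (p:ℝ)) =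
          (LpNorm (p : ℝ≥0∞) f ^ (((2 * p - 2 : ℕ)) : ℝ))⁻¹ := by
        rw [← Real.rpow_neg hpos.le]
        congr 1
        push_cast [Nat.cast_sub (show 2 ≤ 2 * p by omega)]
        ring
      rw [hne, ← Real.rpow_natCast (LpNorm (p : ℝ≥0∞) f) (2 * p - 2), inv_mul_eq_div]
    rwa [he] at h

end NormEst
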